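/- Let p be an odd prime and let r ≥ 1 be a natural number. Let k : Fin p × Fin p → ℕ be a function with k(0, 0) = 0, and let d : Fin r → ℕ. Assume: (i) ∑_{j=0}^{p−1} ∑_{i=0}^{p−1} k(j, i) ≤ r; (ii) the number of indices s ∈ Fin r with d(s) > 0 is at least r − ∑_{j,i} k(j, i); and (iii) 2·r·p = ∑_{j=0}^{p−1} ∑_{i=0}^{p−1} k(j, i)·(2·p·j + 2·i) + 2·p² · ∑_{s} d(s). Then ∑_{j=0}^{p−1} ∑_{i=0}^{p−1} 2·p·j·k(j, i) + (2·p² − 4)·∑_{s} d(s) > 0. -/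
import Mathlib


/-- The arithmetic "Claim" in the proof of Proposition 6.2 (pnof).
Let `p` be an odd prime and `r ≥ 1`.  Let `k : Fin p × Fin p → ℕ` with `k(0,0) = 0`
and `d : Fin r → ℕ` satisfy:
(i)   `∑_{j,i} k(j,i) ≤ r`;
(ii)  at least `r − ∑_{j,i} k(j,i)` of the `d s` are strictly positive;
(iii) `2rp = ∑_{j,i} k(j,i)·(2pj + 2i) + 2p²·∑_s d(s)`
(vanishing of the total dimension `|res_K(α)|`).  Then
`∑_{j,i} 2pj·k(j,i) + (2p² − 4)·∑_s d(s) > 0` (the `K`-fixed dimension is positive). -/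
theorem pnof_claim (p r : ℕ) (hp : p.Prime) (hodd : Odd p) (hr : 1 ≤ r)
    (k : Fin p × Fin p → ℕ) (d : Fin r → ℕ)
    (hk0 : k (⟨0, hp.pos⟩, ⟨0, hp.pos⟩) = 0)
    (h1 : ∑ j : Fin p, ∑ i : Fin p, k (j, i) ≤ r)
    (h2 : r - ∑ j : Fin p, ∑ i : Fin p, k (j, i) ≤
      (Finset.univ.filter fun s : Fin r => 0 < d s).card)
    (h3 : 2 * r * p =
      (∑ j : Fin p, ∑ i : Fin p, k (j, i) * (2 * p * (j : ℕ) + 2 * (i : ℕ)))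
        + 2 * p ^ 2 * ∑ s, d s) :
    0 < (∑ j : Fin p, ∑ i : Fin p, 2 * p * (j : ℕ) * k (j, i))
        + (2 * p ^ 2 - 4) * ∑ s, d s := by
  by_contra h
  push_neg at h
  rw [Nat.le_zero, Nat.add_eq_zero] at h
  obtain ⟨hA, hB⟩ := h
  have hp3 : 3 ≤ p := by
    have h2le := hp.two_le
    have hne : p ≠ 2 := by rintro rfl; exact (by decide : ¬ Odd 2) hodd
    omega
  have hp9 : 9 ≤ p ^ 2 := by nlinarith
  have hD : ∑ s, d s = 0 := by
    rcases Nat.mul_eq_zero.mp hB with h' | h'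
    · omega
    · exact h'
  have hdz : ∀ s : Fin r, d s = 0 := by
    intro s
    exact Finset.sum_eq_zero_iff.mp hD s (Finset.mem_univ s)
  have hcard : (Finset.univ.filter fun s : Fin r => 0 < d s).card = 0 := by
    simp [hdz]
  have hSr : ∑ j : Fin p, ∑ i : Fin p, k (j, i) = r := by omega
  have hk : ∀ j i : Fin p, 2 * p * (j : ℕ) * k (j, i) = 0 := by
    intro j i
    have := Finset.sum_eq_zero_iff.mp hA j (Finset.mem_univ j)
    exact Finset.sum_eq_zero_iff.mp this i (Finset.mem_univ i)
  have hbound : ∀ j i : Fin p, k (j, i) * (2 * p * (j : ℕ) + 2 * (i : ℕ))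
      ≤ 2 * (p - 1) * k (j, i) := by
    intro j i
    have h0 := hk j i
    have hi : (i : ℕ) ≤ p - 1 := by have := i.isLt; omega
    have : k (j, i) * (2 * p * (j : ℕ) + 2 * (i : ℕ))
        = 2 * p * (j : ℕ) * k (j, i) + 2 * (i : ℕ) * k (j, i) := by ring
    rw [this, h0, zero_add]
    have : 2 * (i : ℕ) ≤ 2 * (p - 1) := by omega
    exact Nat.mul_le_mul_right _ this
  have hsum : (∑ j : Fin p, ∑ i : Fin p, k (j, i) * (2 * p * (j : ℕ) + 2 * (i : ℕ)))
      ≤ 2 * (p - 1) * r := by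
    calc (∑ j : Fin p, ∑ i : Fin p, k (j, i) * (2 * p * (j : ℕ) + 2 * (i : ℕ)))
        ≤ ∑ j : Fin p, ∑ i : Fin p, 2 * (p - 1) * k (j, i) := by
          apply Finset.sum_le_sum
          intro j _
          apply Finset.sum_le_sum
          intro i _
          exact hbound j i
      _ = 2 * (p - 1) * ∑ j : Fin p, ∑ i : Fin p, k (j, i) := by
          rw [Finset.mul_sum]
          congr 1
          ext j
          rw [Finset.mul_sum]
      _ = 2 * (p - 1) * r := by rw [hSr]
  rw [hD, mul_zero, add_zero] at h3
  have : 2 * r * p ≤ 2 * (p - 1) * r := h3 ▸ hsum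
  have hexp : 2 * (p - 1) * r + 2 * r = 2 * p * r := by
    have : p - 1 + 1 = p := by omega
    nlinarith [this]
  nlinarith [hexp]
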